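/- Let G be a connected graph, T a spanning tree of G, and suppose every vertex v of T is within distance r (in T) of a designated vertex a_v in a set A ⊆ V(T). Let c(a) = |{v : a_v = a}| for a ∈ A and c(v)=0 otherwise. Then SW_k(T) ≤ SW_k(T,c) + r·k·C(n,k), where n = |V(T)|. -/

import Mathlib

open scoped Classical
open Finset

noncomputable def steinerDist {V : Type*} (G : SimpleGraph V) (S : Finset V) : ℕ :=
  sInf {m : ℕ | ∃ H : G.Subgraph, H.Connected ∧ ↑S ⊆ H.verts ∧ H.edgeSet.ncard = m}

noncomputable def swk {V : Type*} [Fintype V] (k : ℕ) (G : SimpleGraph V) : ℕ :=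
  ∑ S ∈ Finset.powersetCard k (Finset.univ : Finset V), steinerDist G S

noncomputable def wswk {V : Type*} [Fintype V] (k : ℕ) (G : SimpleGraph V) (c : V → ℕ) : ℕ :=
  ∑ S ∈ Finset.powersetCard k (Finset.univ : Finset (Σ v : V, Fin (c v))), steinerDist G (S.image Sigma.fst)

/-- The top subgraph of a connected graph is connected. -/
lemma aux_top_connected {V : Type*} {G : SimpleGraph V} (h : G.Connected) :
    (⊤ : G.Subgraph).Connected := by
  rw [SimpleGraph.Subgraph.connected_iff']
  exact (SimpleGraph.Subgraph.topIso (G := G)).connected_iff.mpr h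

lemma steinerDist_le_of_subgraph {V : Type*} {G : SimpleGraph V} {S : Finset V}
    (H : G.Subgraph) (hH : H.Connected) (hS : ↑S ⊆ H.verts) :
    steinerDist G S ≤ H.edgeSet.ncard :=
  Nat.sInf_le ⟨H, hH, hS, rfl⟩

lemma exists_min_subgraph {V : Type*} {G : SimpleGraph V} (hG : G.Connected) (S : Finset V) :
    ∃ H : G.Subgraph, H.Connected ∧ ↑S ⊆ H.verts ∧ H.edgeSet.ncard = steinerDist G S := by
  have hne : {m : ℕ | ∃ H : G.Subgraph, H.Connected ∧ ↑S ⊆ H.verts ∧ H.edgeSet.ncard = m}.Nonempty :=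
    ⟨_, ⊤, aux_top_connected hG, by simp, rfl⟩
  exact Nat.sInf_mem hne

lemma walk_toSubgraph_ncard_le {V : Type*} {G : SimpleGraph V} {u v : V} (p : G.Walk u v) :
    p.toSubgraph.edgeSet.ncard ≤ p.length := by
  have h1 : p.toSubgraph.edgeSet = ↑p.edges.toFinset := by
    rw [SimpleGraph.Walk.edgeSet_toSubgraph, List.coe_toFinset]; rfl
  rw [h1, Set.ncard_coe_finset]
  calc p.edges.toFinset.card ≤ p.edges.length := p.edges.toFinset_card_le
    _ = p.length := p.length_edges

/-- Extend a connected subgraph containing the images `a v` to one containing `S`,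
adding at most `∑ v ∈ S, dist v (a v)` edges. -/
lemma extend_subgraph {V : Type*} {T : SimpleGraph V} (hc : T.Connected) (a : V → V)
    (S : Finset V) : ∀ H : T.Subgraph, H.Connected → ↑(S.image a) ⊆ H.verts →
    ∃ H' : T.Subgraph, H'.Connected ∧ ↑S ⊆ H'.verts ∧ H.verts ⊆ H'.verts ∧
      H'.edgeSet.ncard ≤ H.edgeSet.ncard + ∑ v ∈ S, T.dist v (a v) := by
  induction S using Finset.induction_on with
  | empty => intro H h1 h2; exact ⟨H, h1, by simp, subset_rfl, by simp⟩
  | @insert v S hv ih =>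
    intro H h1 h2
    have himg : ↑(S.image a) ⊆ H.verts := by
      refine Set.Subset.trans ?_ h2
      exact_mod_cast Finset.coe_subset.mpr (Finset.image_subset_image (Finset.subset_insert v S))
    obtain ⟨H', hH'c, hS, hHsub, hcard⟩ := ih H h1 himg
    obtain ⟨p, hp⟩ := (hc.preconnected v (a v)).exists_walk_length_eq_dist
    have hav : a v ∈ H'.verts := by
      apply hHsub
      apply h2
      simp only [Finset.coe_image, Set.mem_image, Finset.mem_coe]
      exact ⟨v, Finset.mem_insert_self v S, rfl⟩
    refine ⟨H' ⊔ p.toSubgraph, ?_, ?_, ?_, ?_⟩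
    · exact SimpleGraph.Subgraph.connected_sup hH'c.preconnected p.toSubgraph_connected.preconnected ⟨a v, hav, p.end_mem_verts_toSubgraph⟩
    · intro x hx
      rw [SimpleGraph.Subgraph.verts_sup]
      simp only [Finset.coe_insert, Set.mem_insert_iff, Finset.mem_coe] at hx
      rcases hx with rfl | hx
      · exact Or.inr p.start_mem_verts_toSubgraph
      · exact Or.inl (hS hx)
    · intro x hx
      rw [SimpleGraph.Subgraph.verts_sup]
      exact Or.inl (hHsub hx)
    · calc (H' ⊔ p.toSubgraph).edgeSet.ncard
          ≤ H'.edgeSet.ncard + p.toSubgraph.edgeSet.ncard := by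
            rw [SimpleGraph.Subgraph.edgeSet_sup]; exact Set.ncard_union_le _ _
        _ ≤ (H.edgeSet.ncard + ∑ w ∈ S, T.dist w (a w)) + T.dist v (a v) := by
            have hle : p.toSubgraph.edgeSet.ncard ≤ T.dist v (a v) := by
              rw [← hp]; exact walk_toSubgraph_ncard_le p
            omega
        _ = H.edgeSet.ncard + ∑ w ∈ insert v S, T.dist w (a w) := by
            rw [Finset.sum_insert hv]; ring

lemma steinerDist_le_image {V : Type*} {T : SimpleGraph V} (hc : T.Connected) (a : V → V)
    (S : Finset V) :
    steinerDist T S ≤ steinerDist T (S.image a) + ∑ v ∈ S, T.dist v (a v) := by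
  obtain ⟨H, hHc, hHS, hHcard⟩ := exists_min_subgraph hc (S.image a)
  obtain ⟨H', h1, h2, _, h4⟩ := extend_subgraph hc a S H hHc hHS
  calc steinerDist T S ≤ H'.edgeSet.ncard := steinerDist_le_of_subgraph H' h1 h2
    _ ≤ H.edgeSet.ncard + ∑ v ∈ S, T.dist v (a v) := h4
    _ = steinerDist T (S.image a) + ∑ v ∈ S, T.dist v (a v) := by rw [hHcard]

lemma equivFin_coe_inj {α : Type*} {s t : Finset α} (hs : s = t) (x : s) (y : t)
    (h : ((s.equivFin x : Fin s.card) : ℕ) = ((t.equivFin y : Fin t.card) : ℕ)) :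
    (x : α) = (y : α) := by
  subst hs
  have : s.equivFin x = s.equivFin y := Fin.ext h
  have := s.equivFin.injective this
  exact congrArg Subtype.val this

/-- if every vertex v of a spanning tree T of G is within distance r in T
of a designated vertex a_v ∈ A, and c(x) counts the vertices designated to x, then
SW_k(T) ≤ SW_k(T,c) + r·k·C(n,k). -/
theorem unweighted_vs_weighted_steiner_wiener {V : Type*} [Fintype V]
    (G T : SimpleGraph V) (hG : G.Connected) (hTG : T ≤ G) (hT : T.IsTree)
    (A : Set V) (a : V → V) (hmem : ∀ v, a v ∈ A) (r : ℕ)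
    (hdist : ∀ v, T.dist v (a v) ≤ r) (k : ℕ)
    (c : V → ℕ) (hc : ∀ x, c x = (Finset.univ.filter fun v => a v = x).card) :
    swk k T ≤ wswk k T c + r * k * Nat.choose (Fintype.card V) k := by
  have hTc : T.Connected := hT.isConnected
  -- the injection ψ : V → Σ x, Fin (c x)
  have hmemf : ∀ v : V, v ∈ Finset.univ.filter fun w => a w = a v := by
    intro v; simp
  set ψ : V → Σ x : V, Fin (c x) := fun v =>
    ⟨a v, Fin.cast (hc (a v)).symm
      ((Finset.univ.filter fun w => a w = a v).equivFin ⟨v, hmemf v⟩)⟩ with hψ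
  have hψfst : ∀ v, (ψ v).1 = a v := fun v => rfl
  have hψinj : Function.Injective ψ := by
    intro v w h
    have h1 : a v = a w := congrArg Sigma.fst h
    have h2 : ((ψ v).2 : ℕ) = ((ψ w).2 : ℕ) := by rw [h]
    change (((Finset.univ.filter fun x => a x = a v).equivFin ⟨v, hmemf v⟩ : Fin _) : ℕ) = (((Finset.univ.filter fun x => a x = a w).equivFin ⟨w, hmemf w⟩ : Fin _) : ℕ) at h2
    exact equivFin_coe_inj (by rw [h1]) ⟨v, hmemf v⟩ ⟨w, hmemf w⟩ h2
  set Ψ : Finset V ↪ Finset (Σ x : V, Fin (c x)) :=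
    ⟨fun S => S.map ⟨ψ, hψinj⟩, Finset.map_injective _⟩ with hΨ
  -- key per-set bound
  have key : ∀ S ∈ Finset.powersetCard k (Finset.univ : Finset V),
      steinerDist T S ≤ steinerDist T ((Ψ S).image Sigma.fst) + r * k := by
    intro S hS
    rw [Finset.mem_powersetCard] at hS
    have himg : (Ψ S).image Sigma.fst = S.image a := by
      simp only [hΨ, Function.Embedding.coeFn_mk, Finset.map_eq_image, Finset.image_image]
      exact Finset.image_congr fun v _ => rfl
    rw [himg]
    calc steinerDist T S ≤ steinerDist T (S.image a) + ∑ v ∈ S, T.dist v (a v) :=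
          steinerDist_le_image hTc a S
      _ ≤ steinerDist T (S.image a) + r * k := by
          gcongr
          calc ∑ v ∈ S, T.dist v (a v) ≤ ∑ _v ∈ S, r := Finset.sum_le_sum fun v _ => hdist v
            _ = S.card * r := by rw [Finset.sum_const, smul_eq_mul]
            _ = r * k := by rw [hS.2, Nat.mul_comm]
  have step1 : swk k T ≤
      (∑ S ∈ Finset.powersetCard k (Finset.univ : Finset V),
        steinerDist T ((Ψ S).image Sigma.fst)) + r * k * Nat.choose (Fintype.card V) k := by
    unfold swk
    calc ∑ S ∈ Finset.powersetCard k (Finset.univ : Finset V), steinerDist T S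
        ≤ ∑ S ∈ Finset.powersetCard k (Finset.univ : Finset V),
            (steinerDist T ((Ψ S).image Sigma.fst) + r * k) := Finset.sum_le_sum key
      _ = (∑ S ∈ Finset.powersetCard k (Finset.univ : Finset V),
            steinerDist T ((Ψ S).image Sigma.fst)) + r * k * Nat.choose (Fintype.card V) k := by
          rw [Finset.sum_add_distrib, Finset.sum_const, smul_eq_mul,
            Finset.card_powersetCard, Finset.card_univ, Nat.mul_comm]
  refine le_trans step1 ?_
  have step2 : (∑ S ∈ Finset.powersetCard k (Finset.univ : Finset V),
      steinerDist T ((Ψ S).image Sigma.fst)) ≤ wswk k T c := by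
    rw [← Finset.sum_map (Finset.powersetCard k (Finset.univ : Finset V)) Ψ
      (fun Q => steinerDist T (Q.image Sigma.fst))]
    unfold wswk
    apply Finset.sum_le_sum_of_subset
    intro Q hQ
    rw [Finset.mem_map] at hQ
    obtain ⟨S, hS, rfl⟩ := hQ
    rw [Finset.mem_powersetCard] at hS ⊢
    refine ⟨Finset.subset_univ _, ?_⟩
    simp only [hΨ, Function.Embedding.coeFn_mk, Finset.card_map]
    exact hS.2
  omega
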